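/- For any Somos 4 sequence A over a field K with coefficients α, β, the quantity T(n) = A(n-1)·A(n+2)/(A(n)·A(n+1)) + α·(A(n)^2/(A(n-1)·A(n+1)) + A(n+1)^2/(A(n)·A(n+2))) + β·A(n)·A(n+1)/(A(n-1)·A(n+2)) is independent of n, i.e. T(m) = T(n) for all m, n ∈ ℤ. -/

import Mathlib

lemma somos4_key {K : Type*} [Field K] (α β a b c d e : K)
    (ha : a ≠ 0) (hb : b ≠ 0) (hc : c ≠ 0) (hd : d ≠ 0) (he : e ≠ 0)
    (h : e * a = α * (d * b) + β * c ^ 2) :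
    b * e / (c * d) + α * (c ^ 2 / (b * d) + d ^ 2 / (c * e)) + β * (c * d) / (b * e)
      = a * d / (b * c) + α * (b ^ 2 / (a * c) + c ^ 2 / (b * d)) + β * (b * c) / (a * d) := by
  field_simp
  linear_combination (b ^ 2 * e - a * d ^ 2) * h

/-- The translation invariant of a Somos 4 sequence is independent of `n`. -/
theorem somos4_translation_invariant {K : Type*} [Field K] (α β : K) (A : ℤ → K)
    (hA : ∀ n : ℤ, A n ≠ 0)
    (hrec : ∀ n : ℤ, A (n + 4) * A n = α * (A (n + 3) * A (n + 1)) + β * (A (n + 2)) ^ 2) :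
    ∀ m n : ℤ,
      (A (m - 1) * A (m + 2) / (A m * A (m + 1))
        + α * ((A m) ^ 2 / (A (m - 1) * A (m + 1)) + (A (m + 1)) ^ 2 / (A m * A (m + 2)))
        + β * (A m * A (m + 1)) / (A (m - 1) * A (m + 2)))
      = (A (n - 1) * A (n + 2) / (A n * A (n + 1))
        + α * ((A n) ^ 2 / (A (n - 1) * A (n + 1)) + (A (n + 1)) ^ 2 / (A n * A (n + 2)))
        + β * (A n * A (n + 1)) / (A (n - 1) * A (n + 2))) := by
  set T : ℤ → K := fun n =>
      A (n - 1) * A (n + 2) / (A n * A (n + 1))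
        + α * ((A n) ^ 2 / (A (n - 1) * A (n + 1)) + (A (n + 1)) ^ 2 / (A n * A (n + 2)))
        + β * (A n * A (n + 1)) / (A (n - 1) * A (n + 2)) with hT
  have step : ∀ n : ℤ, T (n + 1) = T n := by
    intro n
    have h := hrec (n - 1)
    have h' : A (n + 3) * A (n - 1)
        = α * (A (n + 2) * A n) + β * (A (n + 1)) ^ 2 := by
      have e1 : n - 1 + 4 = n + 3 := by ring
      have e2 : n - 1 + 3 = n + 2 := by ring
      have e3 : n - 1 + 2 = n + 1 := by ring
      have e4 : n - 1 + 1 = n := by ring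
      rw [e1, e2, e3, e4] at h
      exact h
    have e5 : n + 1 - 1 = n := by ring
    have e6 : n + 1 + 2 = n + 3 := by ring
    have e7 : n + 1 + 1 = n + 2 := by ring
    simp only [hT, e5, e6, e7]
    exact somos4_key α β (A (n - 1)) (A n) (A (n + 1)) (A (n + 2)) (A (n + 3))
      (hA _) (hA _) (hA _) (hA _) (hA _) h'
  have const : ∀ n : ℤ, T n = T 0 := by
    intro n
    induction n using Int.induction_on with
    | zero => rfl
    | succ k ih => rw [step k, ih]
    | pred k ih =>
        have h2 := step (-(k : ℤ) - 1)
        rw [show -(k : ℤ) - 1 + 1 = -(k : ℤ) by ring] at h2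
        calc T (-(k : ℤ) - 1) = T (-(k : ℤ)) := h2.symm
          _ = T 0 := ih
  intro m n
  show T m = T n
  rw [const m, const n]
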